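/- arXiv:2510.15326 — 6 statements merged into one kernel-verified Lean document; each statement's English description precedes it below -/
import Mathlib

section
/- Let Ω ⊆ ℂ be open, let u : Ω → ℝ and α, β : Ω → ℂ be smooth, and suppose that on Ω: e^{2u} = |α|² + |β|²; α_z̄ = 0 (α is holomorphic); and (1/2)·ᾱ·α_z + β̄·β_z − u_z·e^{2u} = 0. Then β·(β̄)_z̄ = β̄·β_z̄ holds everywhere on Ω. -/
open Complex ComplexConjugate

/-- Wirtinger derivative `g_z = (∂ₓg - i ∂_y g)/2`. -/
noncomputable def wderivZ (g : ℂ → ℂ) (w : ℂ) : ℂ :=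
  (fderiv ℝ g w 1 - Complex.I * fderiv ℝ g w Complex.I) / 2

/-- Wirtinger derivative `g_z̄ = (∂ₓg + i ∂_y g)/2`. -/
noncomputable def wderivZbar (g : ℂ → ℂ) (w : ℂ) : ℂ :=
  (fderiv ℝ g w 1 + Complex.I * fderiv ℝ g w Complex.I) / 2

theorem stmt0 (Ω : Set ℂ) (hΩ : IsOpen Ω)
    (u : ℂ → ℝ) (α β : ℂ → ℂ)
    (hu : ContDiffOn ℝ (⊤ : ℕ∞) u Ω)
    (hα : ContDiffOn ℝ (⊤ : ℕ∞) α Ω)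
    (hβ : ContDiffOn ℝ (⊤ : ℕ∞) β Ω)
    (h1 : ∀ w ∈ Ω, Real.exp (2 * u w) = ‖α w‖ ^ 2 + ‖β w‖ ^ 2)
    (h2 : ∀ w ∈ Ω, wderivZbar α w = 0)
    (h3 : ∀ w ∈ Ω,
      (1 / 2 : ℂ) * conj (α w) * wderivZ α w + conj (β w) * wderivZ β w
        - wderivZ (fun z => (u z : ℂ)) w * (Real.exp (2 * u w) : ℂ) = 0) :
    ∀ w ∈ Ω, β w * wderivZbar (fun z => conj (β z)) w = conj (β w) * wderivZbar β w := by
  intro w hw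
  have hmem : Ω ∈ nhds w := hΩ.mem_nhds hw
  have hαd : DifferentiableAt ℝ α w := (hα.contDiffAt hmem).differentiableAt (by simp)
  have hβd : DifferentiableAt ℝ β w := (hβ.contDiffAt hmem).differentiableAt (by simp)
  have hud : DifferentiableAt ℝ u w := (hu.contDiffAt hmem).differentiableAt (by simp)
  set A := fderiv ℝ α w with hA
  set B := fderiv ℝ β w with hB
  set Du := fderiv ℝ u w with hDu
  -- derivative of conj ∘ β and conj ∘ α
  have hβc : HasFDerivAt (fun z => conj (β z))
      ((Complex.conjCLE : ℂ ≃L[ℝ] ℂ).toContinuousLinearMap.comp B) w :=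
    (Complex.conjCLE.hasFDerivAt).comp w hβd.hasFDerivAt
  have hαc : HasFDerivAt (fun z => conj (α z))
      ((Complex.conjCLE : ℂ ≃L[ℝ] ℂ).toContinuousLinearMap.comp A) w :=
    (Complex.conjCLE.hasFDerivAt).comp w hαd.hasFDerivAt
  -- derivative of u as complex-valued
  have huc : HasFDerivAt (fun z => ((u z : ℝ) : ℂ)) (Complex.ofRealCLM.comp Du) w :=
    Complex.ofRealCLM.hasFDerivAt.comp w hud.hasFDerivAt
  -- derivative of E := fun z => (Real.exp (2 * u z) : ℂ)
  have h2u : HasFDerivAt (fun z => 2 * u z) ((2 : ℝ) • Du) w := by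
    simpa using hud.hasFDerivAt.const_mul (2 : ℝ)
  have hexp : HasFDerivAt (fun z => Real.exp (2 * u z))
      (Real.exp (2 * u w) • ((2 : ℝ) • Du)) w :=
    by have := (Real.hasDerivAt_exp (2 * u w)).comp_hasFDerivAt w h2u; exact this
  have hE : HasFDerivAt (fun z => ((Real.exp (2 * u z) : ℝ) : ℂ))
      (Complex.ofRealCLM.comp (Real.exp (2 * u w) • ((2 : ℝ) • Du))) w :=
    Complex.ofRealCLM.hasFDerivAt.comp w hexp
  -- derivative of S := α * conj α + β * conj β
  have hS : HasFDerivAt (fun z => α z * conj (α z) + β z * conj (β z))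
      ((α w • ((Complex.conjCLE : ℂ ≃L[ℝ] ℂ).toContinuousLinearMap.comp A) + conj (α w) • A)
        + (β w • ((Complex.conjCLE : ℂ ≃L[ℝ] ℂ).toContinuousLinearMap.comp B) + conj (β w) • B)) w :=
    (hαd.hasFDerivAt.mul hαc).add (hβd.hasFDerivAt.mul hβc)
  -- E = S near w
  have hES : (fun z => ((Real.exp (2 * u z) : ℝ) : ℂ))
      =ᶠ[nhds w] (fun z => α z * conj (α z) + β z * conj (β z)) := by
    filter_upwards [hmem] with z hz
    rw [h1 z hz, Complex.sq_norm, Complex.sq_norm, Complex.ofReal_add,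
      Complex.mul_conj, Complex.mul_conj]
  have hfd := hES.fderiv_eq (𝕜 := ℝ)
  rw [hE.fderiv, hS.fderiv] at hfd
  have eq1 := congrFun (congrArg (fun (L : ℂ →L[ℝ] ℂ) => (L : ℂ → ℂ)) hfd) 1
  have eqI := congrFun (congrArg (fun (L : ℂ →L[ℝ] ℂ) => (L : ℂ → ℂ)) hfd) Complex.I
  simp only [ContinuousLinearMap.comp_apply, ContinuousLinearMap.add_apply,
    ContinuousLinearMap.smul_apply, ContinuousLinearEquiv.coe_coe,
    Complex.conjCLE_apply, Complex.ofRealCLM_apply, smul_eq_mul,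
    Complex.ofReal_mul, Complex.real_smul, Complex.ofReal_ofNat] at eq1 eqI
  -- scalar versions of h2, h3
  have h2' := h2 w hw
  have h3' := h3 w hw
  simp only [wderivZbar, wderivZ] at h2' h3' ⊢
  rw [huc.fderiv] at h3'
  rw [hβc.fderiv]
  simp only [ContinuousLinearMap.comp_apply, ContinuousLinearEquiv.coe_coe,
    Complex.conjCLE_apply, Complex.ofRealCLM_apply] at h3' ⊢
  rw [← hA] at h2' h3'
  rw [← hB] at h3' ⊢
  -- conjugate of h3'
  have h3c := congrArg (starRingEnd ℂ) h3'
  simp only [map_sub, map_add, map_mul, map_div₀, map_one, map_ofNat, map_zero,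
    Complex.conj_conj, Complex.conj_I, Complex.conj_ofReal] at h3c
  -- now everything is a scalar identity
  set a1 := A 1
  set aI := A Complex.I
  set b1 := B 1
  set bI := B Complex.I
  set e : ℂ := ((Real.exp (2 * u w) : ℝ) : ℂ)
  set u1 : ℂ := ((Du 1 : ℝ) : ℂ)
  set uI : ℂ := ((Du Complex.I : ℝ) : ℂ)
  have hI : (Complex.I : ℂ) * Complex.I = -1 := Complex.I_mul_I
  linear_combination (1/2 : ℂ) * eq1 + (Complex.I/2) * eqI + 2 * h3c + conj (α w) * h2'
end

section
/- Let Ω ⊆ ℂ be open and let u : Ω → ℝ and α, β, φ : Ω → ℂ be smooth. Suppose that on Ω: e^{2u} = |α|² + |β|²; α_z̄ = 0; β is nowhere vanishing and β = c·|β| for some constant c ∈ ℂ with |c| = 1 (the argument of β is constant); and (1/2)·(ᾱ)_z̄·α − e^{2u}·φ̄ − u_z̄·e^{2u} + β·(β̄)_z̄ = (1/2)·(ᾱ)_z·β. Then φ ≡ 0 on Ω. -/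
open Complex ComplexConjugate

lemma fderiv_conj (g : ℂ → ℂ) (w : ℂ) (hg : DifferentiableAt ℝ g w) (v : ℂ) :
    fderiv ℝ (fun z => conj (g z)) w v = conj (fderiv ℝ g w v) := by
  have h := ((Complex.conjCLE : ℂ ≃L[ℝ] ℂ).toContinuousLinearMap.hasFDerivAt.comp w hg.hasFDerivAt).fderiv
  rw [Function.comp_def] at h
  rw [show (fun z => conj (g z)) = fun x => (Complex.conjCLE : ℂ ≃L[ℝ] ℂ).toContinuousLinearMap (g x) from rfl, h]
  rfl

lemma wderivZbar_conj (g : ℂ → ℂ) (w : ℂ) (hg : DifferentiableAt ℝ g w) :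
    wderivZbar (fun z => conj (g z)) w = conj (wderivZ g w) := by
  simp only [wderivZbar, wderivZ, fderiv_conj g w hg, map_div₀, map_sub, map_mul, Complex.conj_I, map_ofNat]
  ring

lemma wderivZ_conj (g : ℂ → ℂ) (w : ℂ) (hg : DifferentiableAt ℝ g w) :
    wderivZ (fun z => conj (g z)) w = conj (wderivZbar g w) := by
  simp only [wderivZbar, wderivZ, fderiv_conj g w hg, map_div₀, map_add, map_mul, Complex.conj_I, map_ofNat]
  ring

lemma wderivZbar_mul (f g : ℂ → ℂ) (w : ℂ) (hf : DifferentiableAt ℝ f w)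
    (hg : DifferentiableAt ℝ g w) :
    wderivZbar (fun z => f z * g z) w = wderivZbar f w * g w + f w * wderivZbar g w := by
  have h := (hf.hasFDerivAt.fun_mul hg.hasFDerivAt).fderiv
  simp only [wderivZbar, h]
  simp [ContinuousLinearMap.smul_apply]
  ring

lemma wderivZbar_add (f g : ℂ → ℂ) (w : ℂ) (hf : DifferentiableAt ℝ f w)
    (hg : DifferentiableAt ℝ g w) :
    wderivZbar (fun z => f z + g z) w = wderivZbar f w + wderivZbar g w := by
  simp only [wderivZbar, fderiv_fun_add hf hg]
  simp
  ring

lemma wderivZbar_congr (f g : ℂ → ℂ) (w : ℂ) (h : f =ᶠ[nhds w] g) :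
    wderivZbar f w = wderivZbar g w := by
  simp only [wderivZbar, h.fderiv_eq]

lemma wderivZbar_const_mul (c : ℂ) (g : ℂ → ℂ) (w : ℂ) (hg : DifferentiableAt ℝ g w) :
    wderivZbar (fun z => c * g z) w = c * wderivZbar g w := by
  have h := (hg.hasFDerivAt.const_mul c).fderiv
  simp only [wderivZbar, h]
  simp
  ring

theorem stmt2 (Ω : Set ℂ) (hΩ : IsOpen Ω)
    (u : ℂ → ℝ) (α β φ : ℂ → ℂ)
    (hu : ContDiffOn ℝ (⊤ : ℕ∞) u Ω)
    (hα : ContDiffOn ℝ (⊤ : ℕ∞) α Ω)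
    (hβ : ContDiffOn ℝ (⊤ : ℕ∞) β Ω)
    (hφ : ContDiffOn ℝ (⊤ : ℕ∞) φ Ω)
    (h1 : ∀ w ∈ Ω, Real.exp (2 * u w) = ‖α w‖ ^ 2 + ‖β w‖ ^ 2)
    (h2 : ∀ w ∈ Ω, wderivZbar α w = 0)
    (hβ0 : ∀ w ∈ Ω, β w ≠ 0)
    (hargβ : ∃ c : ℂ, ‖c‖ = 1 ∧ ∀ w ∈ Ω, β w = c * (‖β w‖ : ℂ))
    (h4 : ∀ w ∈ Ω,
      (1 / 2 : ℂ) * wderivZbar (fun z => conj (α z)) w * α w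
        - (Real.exp (2 * u w) : ℂ) * conj (φ w)
        - wderivZbar (fun z => (u z : ℂ)) w * (Real.exp (2 * u w) : ℂ)
        + β w * wderivZbar (fun z => conj (β z)) w
        = (1 / 2 : ℂ) * wderivZ (fun z => conj (α z)) w * β w) :
    ∀ w ∈ Ω, φ w = 0 := by
  obtain ⟨c, hc1, hc⟩ := hargβ
  intro w hw
  have hmem : Ω ∈ nhds w := hΩ.mem_nhds hw
  have hud : DifferentiableAt ℝ u w := (hu.contDiffAt hmem).differentiableAt (by simp)
  have hαd : DifferentiableAt ℝ α w := (hα.contDiffAt hmem).differentiableAt (by simp)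
  have hβd : DifferentiableAt ℝ β w := (hβ.contDiffAt hmem).differentiableAt (by simp)
  have hconjαd : DifferentiableAt ℝ (fun z => conj (α z)) w :=
    ((Complex.conjCLE : ℂ ≃L[ℝ] ℂ).toContinuousLinearMap.differentiable.differentiableAt).comp w hαd
  have hconjβd : DifferentiableAt ℝ (fun z => conj (β z)) w :=
    ((Complex.conjCLE : ℂ ≃L[ℝ] ℂ).toContinuousLinearMap.differentiable.differentiableAt).comp w hβd
  -- conj c * c = 1
  have hcc : conj c * c = 1 := by
    rw [mul_comm, Complex.mul_conj, Complex.normSq_eq_norm_sq, hc1]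
    norm_num
  -- conj β = c̄² β on Ω
  have hconjβ : ∀ z ∈ Ω, conj (β z) = (conj c * conj c) * β z := by
    intro z hz
    rw [hc z hz, map_mul, Complex.conj_ofReal,
      show (conj c * conj c) * (c * ((‖β z‖ : ℝ) : ℂ))
        = (conj c * c) * (conj c * ((‖β z‖ : ℝ) : ℂ)) by ring, hcc, one_mul]
  have hDconjβ : wderivZbar (fun z => conj (β z)) w = (conj c * conj c) * wderivZbar β w := by
    rw [wderivZbar_congr _ _ _ (Filter.eventuallyEq_of_mem hmem hconjβ),
      wderivZbar_const_mul _ _ _ hβd]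
  have term4 : β w * wderivZbar (fun z => conj (β z)) w = wderivZbar β w * conj (β w) := by
    rw [hDconjβ, hconjβ w hw]; ring
  -- the structure equation at w, simplified
  have hZconjα : wderivZ (fun z => conj (α z)) w = 0 := by
    rw [wderivZ_conj _ _ hαd, h2 w hw, map_zero]
  set e : ℂ := ((Real.exp (2 * u w) : ℝ) : ℂ) with he
  set U : ℂ := wderivZbar (fun z => (u z : ℂ)) w with hU
  have h4' : (1 / 2 : ℂ) * conj (wderivZ α w) * α w - e * conj (φ w) - U * e
      + wderivZbar β w * conj (β w) = 0 := by
    have := h4 w hw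
    rw [wderivZbar_conj _ _ hαd, hZconjα, term4, ← he, ← hU] at this
    linear_combination this
  -- differentiate e^{2u} = |α|² + |β|²
  have hFG : (fun z => ((Real.exp (2 * u z) : ℝ) : ℂ))
      =ᶠ[nhds w] (fun z => α z * conj (α z) + β z * conj (β z)) := by
    refine Filter.eventuallyEq_of_mem hmem (fun z hz => ?_)
    rw [Complex.mul_conj, Complex.mul_conj, Complex.normSq_eq_norm_sq, Complex.normSq_eq_norm_sq,
      h1 z hz]
    push_cast
    ring
  have hUder : HasFDerivAt (fun z => ((u z : ℝ) : ℂ))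
      (Complex.ofRealCLM.comp (fderiv ℝ u w)) w :=
    Complex.ofRealCLM.hasFDerivAt.comp w hud.hasFDerivAt
  have hUval : U = (((fderiv ℝ u w 1 : ℝ) : ℂ) + Complex.I * ((fderiv ℝ u w Complex.I : ℝ) : ℂ)) / 2 := by
    rw [hU, wderivZbar, hUder.fderiv]; rfl
  have hexp : HasFDerivAt (fun z => Real.exp (2 * u z))
      (Real.exp (2 * u w) • ((2 : ℝ) • fderiv ℝ u w)) w :=
    (Real.hasDerivAt_exp (2 * u w)).comp_hasFDerivAt (f := fun z => 2 * u z) w (hud.hasFDerivAt.const_mul 2)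
  have hFder : HasFDerivAt (fun z => ((Real.exp (2 * u z) : ℝ) : ℂ))
      (Complex.ofRealCLM.comp (Real.exp (2 * u w) • ((2 : ℝ) • fderiv ℝ u w))) w :=
    Complex.ofRealCLM.hasFDerivAt.comp w hexp
  have hDF : wderivZbar (fun z => ((Real.exp (2 * u z) : ℝ) : ℂ)) w = e * (2 * U) := by
    rw [wderivZbar, hFder.fderiv, hUval, he]
    simp [ContinuousLinearMap.comp_apply, ContinuousLinearMap.smul_apply]
    push_cast
    ring
  have hDG : wderivZbar (fun z => α z * conj (α z) + β z * conj (β z)) w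
      = α w * conj (wderivZ α w) + 2 * (wderivZbar β w * conj (β w)) := by
    rw [wderivZbar_add _ _ _ (hαd.fun_mul hconjαd) (hβd.fun_mul hconjβd),
      wderivZbar_mul _ _ _ hαd hconjαd, wderivZbar_mul _ _ _ hβd hconjβd,
      wderivZbar_conj _ _ hαd, h2 w hw, term4]
    ring
  have E1 : e * (2 * U) = α w * conj (wderivZ α w) + 2 * (wderivZbar β w * conj (β w)) := by
    rw [← hDF, wderivZbar_congr _ _ _ hFG, hDG]
  -- conclude
  have he0 : e ≠ 0 := by
    rw [he]
    exact_mod_cast Real.exp_ne_zero _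
  have hφ0 : e * conj (φ w) = 0 := by linear_combination (-1 : ℂ) * h4' - (1/2 : ℂ) * E1
  have : conj (φ w) = 0 := by
    rcases mul_eq_zero.mp hφ0 with h | h
    · exact absurd h he0
    · exact h
  simpa using this
end

section
/- Let Ω ⊆ ℂ be open and let f, N : Ω → ℝ⁴ be smooth, and let ⟨v, w⟩ := Σ_{k=1}^{4} v_k w_k denote the ℂ-bilinear form on ℂ⁴ extending the Euclidean inner product. Assume on Ω: ⟨f, f⟩ = 1, ⟨N, N⟩ = 1, ⟨f, N⟩ = 0, ⟨N, f_z⟩ = 0 (N is a unit normal of f along S³), ⟨f_z, f_z⟩ = 0 and ⟨f_z, f_z̄⟩ = e^û for a smooth function û : Ω → ℝ (f is a conformal immersion with metric 2e^û dz dz̄), and ⟨f_{zz̄}, N⟩ = 0 (f is minimal). Set Q := ⟨f_{zz}, N⟩. Then on Ω: (i) N_z = −Q·e^{−û}·f_z̄; (ii) ⟨N_z, N_z⟩ = 0 and ⟨N_z, N_z̄⟩ = |Q|² e^{−û}; and (iii) the map 𝔣 := (f + iN)/√2 satisfies ⟨𝔣_z, 𝔣_z⟩ = −iQ and ⟨𝔣_z,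 conj(𝔣_z)⟩ = (e^û + |Q|² e^{−û})/2. -/
open Complex ComplexConjugate

/-- Componentwise Wirtinger derivative `g_z` on `ℂ⁴`-valued maps. -/
noncomputable def vderivZ (g : ℂ → Fin 4 → ℂ) (w : ℂ) : Fin 4 → ℂ :=
  fun k => wderivZ (fun z => g z k) w

/-- Componentwise Wirtinger derivative `g_z̄` on `ℂ⁴`-valued maps. -/
noncomputable def vderivZbar (g : ℂ → Fin 4 → ℂ) (w : ℂ) : Fin 4 → ℂ :=
  fun k => wderivZbar (fun z => g z k) w

/-- The `ℂ`-bilinear form `⟨v, w⟩ = ∑ vₖ wₖ` on `ℂ⁴`. -/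
noncomputable def bilin (v w : Fin 4 → ℂ) : ℂ := ∑ k, v k * w k

/-- Complexification of an `ℝ⁴`-valued map. -/
def cx (f : ℂ → Fin 4 → ℝ) (w : ℂ) : Fin 4 → ℂ := fun k => (f w k : ℂ)

/-- `𝔣 := (f + iN)/√2`. -/
noncomputable def liftF (f N : ℂ → Fin 4 → ℝ) (w : ℂ) : Fin 4 → ℂ :=
  fun k => ((f w k : ℂ) + Complex.I * (N w k : ℂ)) / (Real.sqrt 2 : ℂ)

/-- The Hopf differential coefficient `Q = ⟨f_zz, N⟩`. -/
noncomputable def hopfQ (f N : ℂ → Fin 4 → ℝ) (w : ℂ) : ℂ :=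
  bilin (vderivZ (fun z => vderivZ (cx f) z) w) (cx N w)

/- ### Auxiliary lemmas -/

lemma wderivZ_congr_const {g : ℂ → ℂ} {c : ℂ} {s : Set ℂ} (hs : IsOpen s) {w : ℂ} (hw : w ∈ s)
    (h : ∀ z ∈ s, g z = c) : wderivZ g w = 0 := by
  have he : g =ᶠ[nhds w] (fun _ => c) := by
    filter_upwards [hs.mem_nhds hw] with z hz using h z hz
  unfold wderivZ
  rw [he.fderiv_eq, fderiv_fun_const]
  simp

lemma wderivZbar_congr_const {g : ℂ → ℂ} {c : ℂ} {s : Set ℂ} (hs : IsOpen s) {w : ℂ} (hw : w ∈ s)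
    (h : ∀ z ∈ s, g z = c) : wderivZbar g w = 0 := by
  have he : g =ᶠ[nhds w] (fun _ => c) := by
    filter_upwards [hs.mem_nhds hw] with z hz using h z hz
  unfold wderivZbar
  rw [he.fderiv_eq, fderiv_fun_const]
  simp

lemma hasFDerivAt_bilin (g h : ℂ → Fin 4 → ℂ) (w : ℂ)
    (hg : ∀ k, DifferentiableAt ℝ (fun z => g z k) w)
    (hh : ∀ k, DifferentiableAt ℝ (fun z => h z k) w) :
    HasFDerivAt (fun z => bilin (g z) (h z))
      (∑ k, (g w k • fderiv ℝ (fun z => h z k) w + h w k • fderiv ℝ (fun z => g z k) w)) w := by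
  have : (fun z => bilin (g z) (h z)) = fun z => ∑ k, g z k * h z k := by
    funext z; rfl
  rw [this]
  exact HasFDerivAt.fun_sum fun k _ => ((hg k).hasFDerivAt.mul (hh k).hasFDerivAt)

lemma wderivZ_bilin (g h : ℂ → Fin 4 → ℂ) (w : ℂ)
    (hg : ∀ k, DifferentiableAt ℝ (fun z => g z k) w)
    (hh : ∀ k, DifferentiableAt ℝ (fun z => h z k) w) :
    wderivZ (fun z => bilin (g z) (h z)) w
      = bilin (vderivZ g w) (h w) + bilin (g w) (vderivZ h w) := by
  have H := (hasFDerivAt_bilin g h w hg hh).fderiv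
  unfold wderivZ
  rw [H]
  simp only [ContinuousLinearMap.sum_apply, ContinuousLinearMap.add_apply,
    ContinuousLinearMap.smul_apply, smul_eq_mul, bilin, vderivZ, wderivZ,
    Fin.sum_univ_four]
  ring

lemma wderivZbar_bilin (g h : ℂ → Fin 4 → ℂ) (w : ℂ)
    (hg : ∀ k, DifferentiableAt ℝ (fun z => g z k) w)
    (hh : ∀ k, DifferentiableAt ℝ (fun z => h z k) w) :
    wderivZbar (fun z => bilin (g z) (h z)) w
      = bilin (vderivZbar g w) (h w) + bilin (g w) (vderivZbar h w) := by
  have H := (hasFDerivAt_bilin g h w hg hh).fderiv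
  unfold wderivZbar
  rw [H]
  simp only [ContinuousLinearMap.sum_apply, ContinuousLinearMap.add_apply,
    ContinuousLinearMap.smul_apply, smul_eq_mul, bilin, vderivZbar, wderivZbar,
    Fin.sum_univ_four]
  ring

lemma wderivZbar_eq_conj {u : ℂ → ℝ} {w : ℂ} (hu : DifferentiableAt ℝ u w) :
    wderivZbar (fun z => (u z : ℂ)) w = conj (wderivZ (fun z => (u z : ℂ)) w) := by
  have hc : ∀ v : ℂ, fderiv ℝ (fun z => (u z : ℂ)) w v = ((fderiv ℝ u w v : ℝ) : ℂ) := by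
    intro v
    have h2 : fderiv ℝ (fun z => ((u z : ℝ) : ℂ)) w = Complex.ofRealCLM.comp (fderiv ℝ u w) :=
      (Complex.ofRealCLM.hasFDerivAt.comp w hu.hasFDerivAt).fderiv
    rw [h2]; rfl
  unfold wderivZ wderivZbar
  rw [hc 1, hc Complex.I]
  simp [map_div₀, map_add, map_sub, map_mul, Complex.conj_ofReal, map_ofNat]

lemma contDiffOn_wderivZ {g : ℂ → ℂ} {s : Set ℂ} (hs : IsOpen s)
    (hg : ContDiffOn ℝ (⊤ : ℕ∞) g s) : ContDiffOn ℝ (⊤ : ℕ∞) (wderivZ g) s := by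
  have hd : ContDiffOn ℝ (⊤ : ℕ∞) (fun x => fderiv ℝ g x) s :=
    hg.fderiv_of_isOpen hs (by simp)
  have h1 : ContDiffOn ℝ (⊤ : ℕ∞) (fun x => fderiv ℝ g x 1) s :=
    (ContinuousLinearMap.apply ℝ ℂ (1 : ℂ)).contDiff.comp_contDiffOn hd
  have h2 : ContDiffOn ℝ (⊤ : ℕ∞) (fun x => fderiv ℝ g x Complex.I) s :=
    (ContinuousLinearMap.apply ℝ ℂ (Complex.I : ℂ)).contDiff.comp_contDiffOn hd
  exact ((h1.sub (h2.const_smul (Complex.I : ℂ))).div_const 2).congr (by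
    intro x hx; simp [wderivZ, smul_eq_mul])

lemma contDiffOn_cx {f : ℂ → Fin 4 → ℝ} {s : Set ℂ}
    (hf : ContDiffOn ℝ (⊤ : ℕ∞) f s) (k : Fin 4) :
    ContDiffOn ℝ (⊤ : ℕ∞) (fun z => ((f z k : ℝ) : ℂ)) s :=
  Complex.ofRealCLM.contDiff.comp_contDiffOn
    ((ContinuousLinearMap.proj (R := ℝ) (φ := fun _ : Fin 4 => ℝ) k).contDiff.comp_contDiffOn hf)

lemma contDiffOn_comp_proj {f : ℂ → Fin 4 → ℝ} {s : Set ℂ}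
    (hf : ContDiffOn ℝ (⊤ : ℕ∞) f s) (k : Fin 4) :
    ContDiffOn ℝ (⊤ : ℕ∞) (fun z => f z k) s :=
  (ContinuousLinearMap.proj (R := ℝ) (φ := fun _ : Fin 4 => ℝ) k).contDiff.comp_contDiffOn hf

lemma wderivZ_combo (a b : ℂ → ℂ) (s w : ℂ)
    (ha : DifferentiableAt ℝ a w) (hb : DifferentiableAt ℝ b w) :
    wderivZ (fun z => (a z + Complex.I * b z) / s) w
      = (wderivZ a w + Complex.I * wderivZ b w) / s := by
  have H : HasFDerivAt (fun z => (a z + Complex.I * b z) / s)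
      ((s⁻¹ : ℂ) • (fderiv ℝ a w + (Complex.I : ℂ) • fderiv ℝ b w)) w := by
    have h1 : HasFDerivAt (fun z => a z + Complex.I * b z)
        (fderiv ℝ a w + (Complex.I : ℂ) • fderiv ℝ b w) w := by
      have hb' : HasFDerivAt (fun z => Complex.I * b z) ((Complex.I : ℂ) • fderiv ℝ b w) w := by
        simpa [smul_eq_mul] using hb.hasFDerivAt.fun_const_smul (Complex.I : ℂ)
      exact ha.hasFDerivAt.add hb'
    have := h1.fun_const_smul (s⁻¹ : ℂ)
    simpa [smul_eq_mul, div_eq_inv_mul, mul_comm] using this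
  have hF := H.fderiv
  unfold wderivZ
  rw [hF]
  simp only [ContinuousLinearMap.smul_apply, ContinuousLinearMap.add_apply, smul_eq_mul]
  field_simp
  ring

lemma vec_eq_zero_of_mulVec {M : Matrix (Fin 4) (Fin 4) ℂ} (hdet : (M * Matrix.transpose M).det ≠ 0)
    {V : Fin 4 → ℂ} (h : M.mulVec V = 0) : V = 0 := by
  have hM : IsUnit M.det := by
    rw [Matrix.det_mul, Matrix.det_transpose] at hdet
    exact isUnit_iff_ne_zero.2 fun h0 => hdet (by rw [h0]; ring)
  have h2 := congrArg (M⁻¹.mulVec) h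
  rwa [Matrix.mulVec_mulVec, Matrix.nonsing_inv_mul M hM, Matrix.one_mulVec,
    Matrix.mulVec_zero] at h2

lemma bilin_conj (a b : Fin 4 → ℂ) :
    bilin (fun k => conj (a k)) (fun k => conj (b k)) = conj (bilin a b) := by
  unfold bilin
  rw [map_sum]
  simp [map_mul]
theorem stmt10 (Ω : Set ℂ) (hΩ : IsOpen Ω)
    (f N : ℂ → Fin 4 → ℝ) (uh : ℂ → ℝ)
    (hf : ContDiffOn ℝ (⊤ : ℕ∞) f Ω)
    (hN : ContDiffOn ℝ (⊤ : ℕ∞) N Ω)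
    (huh : ContDiffOn ℝ (⊤ : ℕ∞) uh Ω)
    (hff : ∀ w ∈ Ω, bilin (cx f w) (cx f w) = 1)
    (hNN : ∀ w ∈ Ω, bilin (cx N w) (cx N w) = 1)
    (hfN : ∀ w ∈ Ω, bilin (cx f w) (cx N w) = 0)
    (hNfz : ∀ w ∈ Ω, bilin (cx N w) (vderivZ (cx f) w) = 0)
    (hconf : ∀ w ∈ Ω, bilin (vderivZ (cx f) w) (vderivZ (cx f) w) = 0)
    (hmetric : ∀ w ∈ Ω,
      bilin (vderivZ (cx f) w) (vderivZbar (cx f) w) = (Real.exp (uh w) : ℂ))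
    (hmin : ∀ w ∈ Ω,
      bilin (vderivZbar (fun z => vderivZ (cx f) z) w) (cx N w) = 0) :
    ∀ w ∈ Ω,
      -- (i) `N_z = −Q e^{−û} f_z̄`
      (∀ k, vderivZ (cx N) w k
        = -(hopfQ f N w) * (Real.exp (-uh w) : ℂ) * vderivZbar (cx f) w k) ∧
      -- (ii) `⟨N_z, N_z⟩ = 0` and `⟨N_z, N_z̄⟩ = |Q|² e^{−û}`
      bilin (vderivZ (cx N) w) (vderivZ (cx N) w) = 0 ∧
      bilin (vderivZ (cx N) w) (vderivZbar (cx N) w)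
        = (‖hopfQ f N w‖ : ℂ) ^ 2 * (Real.exp (-uh w) : ℂ) ∧
      -- (iii) properties of the lift `𝔣 = (f + iN)/√2`
      bilin (vderivZ (liftF f N) w) (vderivZ (liftF f N) w) = -Complex.I * hopfQ f N w ∧
      bilin (vderivZ (liftF f N) w) (fun k => conj (vderivZ (liftF f N) w k))
        = ((Real.exp (uh w) : ℂ)
            + (‖hopfQ f N w‖ : ℂ) ^ 2 * (Real.exp (-uh w) : ℂ)) / 2 := by
  intro w hw
  have hmem : Ω ∈ nhds w := hΩ.mem_nhds hw
  -- abbreviations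
  set F : Fin 4 → ℂ := cx f w with hFdef
  set Nv : Fin 4 → ℂ := cx N w with hNvdef
  set FZ : Fin 4 → ℂ := vderivZ (cx f) w with hFZdef
  set FZB : Fin 4 → ℂ := vderivZbar (cx f) w with hFZBdef
  set NZ : Fin 4 → ℂ := vderivZ (cx N) w with hNZdef
  set NZB : Fin 4 → ℂ := vderivZbar (cx N) w with hNZBdef
  set FZZ : Fin 4 → ℂ := vderivZ (fun z => vderivZ (cx f) z) w with hFZZdef
  set FZZB : Fin 4 → ℂ := vderivZbar (fun z => vderivZ (cx f) z) w with hFZZBdef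
  set Q : ℂ := hopfQ f N w with hQdef
  set E : ℂ := (Real.exp (uh w) : ℂ) with hEdef
  set E' : ℂ := (Real.exp (-uh w) : ℂ) with hE'def
  have hQ : Q = bilin FZZ Nv := rfl
  have hEE' : E * E' = 1 := by
    rw [hEdef, hE'def, ← Complex.ofReal_mul, ← Real.exp_add]
    simp
  have hE0 : E ≠ 0 := by
    rw [hEdef]
    exact Complex.ofReal_ne_zero.2 (Real.exp_ne_zero _)
  -- differentiability
  have dF : ∀ k, DifferentiableAt ℝ (fun z => cx f z k) w := fun k =>
    (((contDiffOn_cx hf k).differentiableOn (by simp)).differentiableAt hmem)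
  have dN : ∀ k, DifferentiableAt ℝ (fun z => cx N z k) w := fun k =>
    (((contDiffOn_cx hN k).differentiableOn (by simp)).differentiableAt hmem)
  have dFz : ∀ k, DifferentiableAt ℝ (fun z => vderivZ (cx f) z k) w := fun k =>
    (((contDiffOn_wderivZ hΩ (contDiffOn_cx hf k)).differentiableOn (by simp)).differentiableAt hmem)
  have dfr : ∀ k, DifferentiableAt ℝ (fun z => f z k) w := fun k =>
    (((contDiffOn_comp_proj hf k).differentiableOn (by simp)).differentiableAt hmem)
  have dNr : ∀ k, DifferentiableAt ℝ (fun z => N z k) w := fun k =>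
    (((contDiffOn_comp_proj hN k).differentiableOn (by simp)).differentiableAt hmem)
  -- pointwise facts
  have hFF : bilin F F = 1 := hff w hw
  have hNN2 : bilin Nv Nv = 1 := hNN w hw
  have hFN2 : bilin F Nv = 0 := hfN w hw
  have hNFZ2 : bilin Nv FZ = 0 := hNfz w hw
  have hFZFZ2 : bilin FZ FZ = 0 := hconf w hw
  have hMet2 : bilin FZ FZB = E := hmetric w hw
  have hMin2 : bilin FZZB Nv = 0 := hmin w hw
  have comm : ∀ a b : Fin 4 → ℂ, bilin a b = bilin b a := fun a b => by
    unfold bilin; exact Finset.sum_congr rfl fun k _ => mul_comm _ _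
  -- derivative identities
  have E1 : bilin FZ F + bilin F FZ = 0 := by
    have h0 : wderivZ (fun z => bilin (cx f z) (cx f z)) w = 0 :=
      wderivZ_congr_const hΩ hw hff
    rwa [wderivZ_bilin _ _ _ dF dF] at h0
  have E2 : bilin NZ Nv + bilin Nv NZ = 0 := by
    have h0 : wderivZ (fun z => bilin (cx N z) (cx N z)) w = 0 :=
      wderivZ_congr_const hΩ hw hNN
    rwa [wderivZ_bilin _ _ _ dN dN] at h0
  have E3 : bilin FZ Nv + bilin F NZ = 0 := by
    have h0 : wderivZ (fun z => bilin (cx f z) (cx N z)) w = 0 :=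
      wderivZ_congr_const hΩ hw hfN
    rwa [wderivZ_bilin _ _ _ dF dN] at h0
  have E4 : bilin NZ FZ + bilin Nv FZZ = 0 := by
    have h0 : wderivZ (fun z => bilin (cx N z) (vderivZ (cx f) z)) w = 0 :=
      wderivZ_congr_const hΩ hw hNfz
    rwa [wderivZ_bilin _ _ _ dN dFz] at h0
  have E5 : bilin NZB FZ + bilin Nv FZZB = 0 := by
    have h0 : wderivZbar (fun z => bilin (cx N z) (vderivZ (cx f) z)) w = 0 :=
      wderivZbar_congr_const hΩ hw hNfz
    rwa [wderivZbar_bilin _ _ _ dN dFz] at h0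
  -- cleaned facts
  have hFFZ : bilin F FZ = 0 := by
    rw [comm FZ F] at E1; linear_combination E1 / 2
  have hNvNZ : bilin Nv NZ = 0 := by
    rw [comm NZ Nv] at E2; linear_combination E2 / 2
  have hFNZ : bilin F NZ = 0 := by
    rw [comm FZ Nv, hNFZ2] at E3; linear_combination E3
  have hNZFZ : bilin NZ FZ = -Q := by
    rw [comm Nv FZZ, ← hQ] at E4; linear_combination E4
  have hNZBFZ : bilin NZB FZ = 0 := by
    rw [comm Nv FZZB, hMin2] at E5; linear_combination E5
  -- conjugation facts
  have cFk : ∀ k, conj (F k) = F k := fun k => Complex.conj_ofReal _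
  have cNk : ∀ k, conj (Nv k) = Nv k := fun k => Complex.conj_ofReal _
  have cFZ : ∀ k, FZB k = conj (FZ k) := fun k => wderivZbar_eq_conj (dfr k)
  have cNZ : ∀ k, NZB k = conj (NZ k) := fun k => wderivZbar_eq_conj (dNr k)
  have hFfun : (fun k => conj (F k)) = F := funext cFk
  have hNvfun : (fun k => conj (Nv k)) = Nv := funext cNk
  have hFZBfun : (fun k => conj (FZ k)) = FZB := (funext fun k => (cFZ k).symm)
  have hNZfun : (fun k => conj (NZB k)) = NZ := funext fun k => by
    rw [cNZ k, Complex.conj_conj]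
  have hFFZB : bilin F FZB = 0 := by
    have h := bilin_conj F FZ
    rw [hFfun, hFZBfun, hFFZ, map_zero] at h; exact h
  have hNvFZB : bilin Nv FZB = 0 := by
    have h := bilin_conj Nv FZ
    rw [hNvfun, hFZBfun, hNFZ2, map_zero] at h; exact h
  have hFZBFZB : bilin FZB FZB = 0 := by
    have h := bilin_conj FZ FZ
    rw [hFZBfun, hFZFZ2, map_zero] at h; exact h
  have hNZFZB : bilin NZ FZB = 0 := by
    have h := bilin_conj NZB FZ
    rw [hNZfun, hFZBfun, hNZBFZ, map_zero] at h; exact h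
  -- expanded versions
  have pFF := hFF; have pNN := hNN2; have pFN := hFN2; have pNFZ := hNFZ2
  have pFZFZ := hFZFZ2; have pMet := hMet2; have pFFZ := hFFZ; have pNvNZ := hNvNZ
  have pFNZ := hFNZ; have pNZFZ := hNZFZ; have pFFZB := hFFZB; have pNvFZB := hNvFZB
  have pFZBFZB := hFZBFZB; have pNZFZB := hNZFZB
  simp only [bilin, Fin.sum_univ_four] at pFF pNN pFN pNFZ pFZFZ pMet pFFZ pNvNZ
  simp only [bilin, Fin.sum_univ_four] at pFNZ pNZFZ pFFZB pNvFZB pFZBFZB pNZFZB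
  -- the Gram matrix
  set M : Matrix (Fin 4) (Fin 4) ℂ := Matrix.of ![F, Nv, FZ, FZB] with hMdef
  have hGram : M * Matrix.transpose M =
      Matrix.of ![![1,0,0,0],![0,1,0,0],![0,0,0,E],![0,0,E,0]] := by
    ext i j
    fin_cases i <;> fin_cases j <;>
      simp [hMdef, Matrix.mul_apply, Matrix.transpose_apply, Fin.sum_univ_four, Matrix.vecHead, Matrix.vecTail]
    · linear_combination pFF
    · linear_combination pFN
    · linear_combination pFFZ
    · linear_combination pFFZB
    · linear_combination pFN
    · linear_combination pNN
    · linear_combination pNFZ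
    · linear_combination pNvFZB
    · linear_combination pFFZ
    · linear_combination pNFZ
    · linear_combination pFZFZ
    · linear_combination pMet
    · linear_combination pFFZB
    · linear_combination pNvFZB
    · linear_combination pMet
    · linear_combination pFZBFZB
  have hdet : (M * Matrix.transpose M).det ≠ 0 := by
    rw [hGram]
    simp [Matrix.det_succ_row_zero, Fin.sum_univ_succ]
    exact hE0
  -- part (i)
  set V : Fin 4 → ℂ := fun k => NZ k + Q * E' * FZB k with hVdef
  have hMV : M.mulVec V = 0 := by
    funext j
    fin_cases j <;>
      simp [hMdef, hVdef, Matrix.mulVec, dotProduct, Fin.sum_univ_four]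
    · linear_combination pFNZ + Q * E' * pFFZB
    · linear_combination pNvNZ + Q * E' * pNvFZB
    · linear_combination pNZFZ + Q * E' * pMet + Q * hEE'
    · linear_combination pNZFZB + Q * E' * pFZBFZB
  have hV0 : V = 0 := vec_eq_zero_of_mulVec hdet hMV
  have key : ∀ k, NZ k = -Q * E' * FZB k := by
    intro k
    have h := congrFun hV0 k
    simp only [hVdef, Pi.zero_apply] at h
    linear_combination h
  refine ⟨key, ?_, ?_, ?_, ?_⟩
  · -- ⟨N_z, N_z⟩ = 0
    simp only [bilin, Fin.sum_univ_four, key 0, key 1, key 2, key 3]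
    linear_combination (Q * E') ^ 2 * pFZBFZB
  · -- ⟨N_z, N_z̄⟩ = |Q|² e^{-û}
    have habs : ((‖Q‖ : ℝ) : ℂ) ^ 2 = Q * conj Q := by
      rw [← Complex.ofReal_pow, Complex.sq_norm, Complex.mul_conj]
    have keyb : ∀ k, NZB k = -(conj Q) * E' * FZ k := by
      intro k
      rw [cNZ k, key k]
      simp only [map_mul, map_neg, hE'def, Complex.conj_ofReal, cFZ k, Complex.conj_conj]
    simp only [bilin, Fin.sum_univ_four, key 0, key 1, key 2, key 3,
      keyb 0, keyb 1, keyb 2, keyb 3]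
    linear_combination Q * conj Q * E' ^ 2 * pMet + Q * conj Q * E' * hEE' - E' * habs
  · -- ⟨𝔣_z, 𝔣_z⟩ = -iQ
    have hlift : ∀ k, vderivZ (liftF f N) w k
        = (FZ k + Complex.I * NZ k) / ((Real.sqrt 2 : ℝ) : ℂ) := fun k =>
      wderivZ_combo (fun z => cx f z k) (fun z => cx N z k) ((Real.sqrt 2 : ℝ) : ℂ) w
        (dF k) (dN k)
    have hs2 : ((Real.sqrt 2 : ℝ) : ℂ) * ((Real.sqrt 2 : ℝ) : ℂ) = 2 := by
      rw [← Complex.ofReal_mul, Real.mul_self_sqrt (by norm_num)]; norm_num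
    have hs2ne : ((Real.sqrt 2 : ℝ) : ℂ) ≠ 0 := Complex.ofReal_ne_zero.2 (by positivity)
    simp only [bilin, Fin.sum_univ_four, hlift 0, hlift 1, hlift 2, hlift 3,
      key 0, key 1, key 2, key 3]
    field_simp
    linear_combination pFZFZ - 2*Complex.I*Q*E'*pMet + Complex.I^2*Q^2*E'^2*pFZBFZB
      - 2*Complex.I*Q*hEE' + Complex.I*Q*hs2
  · -- ⟨𝔣_z, conj 𝔣_z⟩
    have hlift : ∀ k, vderivZ (liftF f N) w k
        = (FZ k + Complex.I * NZ k) / ((Real.sqrt 2 : ℝ) : ℂ) := fun k =>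
      wderivZ_combo (fun z => cx f z k) (fun z => cx N z k) ((Real.sqrt 2 : ℝ) : ℂ) w
        (dF k) (dN k)
    have hs2 : ((Real.sqrt 2 : ℝ) : ℂ) * ((Real.sqrt 2 : ℝ) : ℂ) = 2 := by
      rw [← Complex.ofReal_mul, Real.mul_self_sqrt (by norm_num)]; norm_num
    have hs2ne : ((Real.sqrt 2 : ℝ) : ℂ) ≠ 0 := Complex.ofReal_ne_zero.2 (by positivity)
    have habs : ((‖Q‖ : ℝ) : ℂ) ^ 2 = Q * conj Q := by
      rw [← Complex.ofReal_pow, Complex.sq_norm, Complex.mul_conj]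
    have hconjE' : conj E' = E' := by rw [hE'def]; exact Complex.conj_ofReal _
    simp only [bilin, Fin.sum_univ_four, hlift 0, hlift 1, hlift 2, hlift 3,
      key 0, key 1, key 2, key 3]
    simp only [map_div₀, map_add, map_mul, map_neg, Complex.conj_I, Complex.conj_ofReal,
      hconjE', Complex.conj_conj]
    simp only [cFZ, Complex.conj_conj]
    simp only [← cFZ]
    field_simp
    linear_combination 2*pMet + 2*Complex.I*(conj Q)*E'*pFZFZ - 2*Complex.I*Q*E'*pFZBFZB
      - 2*Complex.I^2*Q*(conj Q)*E'^2*pMet - E*hs2 - ((‖Q‖ : ℝ) : ℂ)^2*E'*hs2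
      - 2*E'*habs - 2*Q*(conj Q)*E'^2*E*Complex.I_sq + 2*Q*(conj Q)*E'*hEE'
end

section
/- Let Ω ⊆ ℂ be open, let û : Ω → ℝ be smooth, let α : Ω → ℂ be holomorphic, and let λ ∈ ℂ with |λ| = 1. Define the smooth 2×2-matrix-valued functions on Ω: U := [[û_z/4, −(√2/2)λ⁻¹e^{û/2}], [(√2/2)λ⁻¹αe^{−û/2}, −û_z/4]] and V := [[−û_z̄/4, −(√2/2)λ·ᾱ·e^{−û/2}], [(√2/2)λe^{û/2}, û_z̄/4]]. Let F : Ω → GL(2, ℂ) be smooth with F_z = F·U and F_z̄ = F·V on Ω, and set φ := F·σ₃·F⁻¹ where σ₃ = diag(1, −1). Then φ_{zz̄} = −(e^û + |α|² e^{−û})·φ holds on Ω. -/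
open Complex ComplexConjugate Matrix

/-- Entrywise Wirtinger derivative `g_z` on matrix-valued maps. -/
noncomputable def mderivZ (g : ℂ → Matrix (Fin 2) (Fin 2) ℂ) (w : ℂ) :
    Matrix (Fin 2) (Fin 2) ℂ :=
  Matrix.of fun i j => wderivZ (fun z => g z i j) w

/-- Entrywise Wirtinger derivative `g_z̄` on matrix-valued maps. -/
noncomputable def mderivZbar (g : ℂ → Matrix (Fin 2) (Fin 2) ℂ) (w : ℂ) :
    Matrix (Fin 2) (Fin 2) ℂ :=
  Matrix.of fun i j => wderivZbar (fun z => g z i j) w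

/-- The Pauli matrix `σ₃ = diag(1, −1)`. -/
def sigma3 : Matrix (Fin 2) (Fin 2) ℂ := !![1, 0; 0, -1]

/-- The coefficient `U` of the Maurer–Cartan form. -/
noncomputable def Umat (uh : ℂ → ℝ) (α : ℂ → ℂ) (lam : ℂ) (w : ℂ) :
    Matrix (Fin 2) (Fin 2) ℂ :=
  !![wderivZ (fun z => (uh z : ℂ)) w / 4,
      -((Real.sqrt 2 : ℂ) / 2) * lam⁻¹ * (Real.exp (uh w / 2) : ℂ);
     ((Real.sqrt 2 : ℂ) / 2) * lam⁻¹ * α w * (Real.exp (-(uh w) / 2) : ℂ),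
      -(wderivZ (fun z => (uh z : ℂ)) w) / 4]

/-- The coefficient `V` of the Maurer–Cartan form. -/
noncomputable def Vmat (uh : ℂ → ℝ) (α : ℂ → ℂ) (lam : ℂ) (w : ℂ) :
    Matrix (Fin 2) (Fin 2) ℂ :=
  !![-(wderivZbar (fun z => (uh z : ℂ)) w) / 4,
      -((Real.sqrt 2 : ℂ) / 2) * lam * conj (α w) * (Real.exp (-(uh w) / 2) : ℂ);
     ((Real.sqrt 2 : ℂ) / 2) * lam * (Real.exp (uh w / 2) : ℂ),
      wderivZbar (fun z => (uh z : ℂ)) w / 4]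

section API

lemma wZ_congr {f g : ℂ → ℂ} {w : ℂ} (h : f =ᶠ[nhds w] g) : wderivZ f w = wderivZ g w := by
  unfold wderivZ; rw [h.fderiv_eq]
lemma wZb_congr {f g : ℂ → ℂ} {w : ℂ} (h : f =ᶠ[nhds w] g) : wderivZbar f w = wderivZbar g w := by
  unfold wderivZbar; rw [h.fderiv_eq]
lemma wZ_const (c w : ℂ) : wderivZ (fun _ => c) w = 0 := by
  unfold wderivZ; simp
lemma wZb_const (c w : ℂ) : wderivZbar (fun _ => c) w = 0 := by
  unfold wderivZbar; simp
lemma wZ_add {f g : ℂ → ℂ} {w : ℂ} (hf : DifferentiableAt ℝ f w) (hg : DifferentiableAt ℝ g w) :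
    wderivZ (fun z => f z + g z) w = wderivZ f w + wderivZ g w := by
  unfold wderivZ; rw [fderiv_fun_add hf hg]; simp; ring
lemma wZb_add {f g : ℂ → ℂ} {w : ℂ} (hf : DifferentiableAt ℝ f w) (hg : DifferentiableAt ℝ g w) :
    wderivZbar (fun z => f z + g z) w = wderivZbar f w + wderivZbar g w := by
  unfold wderivZbar; rw [fderiv_fun_add hf hg]; simp; ring
lemma wZ_mul {f g : ℂ → ℂ} {w : ℂ} (hf : DifferentiableAt ℝ f w) (hg : DifferentiableAt ℝ g w) :
    wderivZ (fun z => f z * g z) w = f w * wderivZ g w + g w * wderivZ f w := by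
  unfold wderivZ; rw [fderiv_fun_mul hf hg]; simp [smul_eq_mul]; ring
lemma wZb_mul {f g : ℂ → ℂ} {w : ℂ} (hf : DifferentiableAt ℝ f w) (hg : DifferentiableAt ℝ g w) :
    wderivZbar (fun z => f z * g z) w = f w * wderivZbar g w + g w * wderivZbar f w := by
  unfold wderivZbar; rw [fderiv_fun_mul hf hg]; simp [smul_eq_mul]; ring
lemma wZb_div_const {f : ℂ → ℂ} {w : ℂ} (c : ℂ) (hf : DifferentiableAt ℝ f w) :
    wderivZbar (fun z => f z / c) w = wderivZbar f w / c := by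
  have e : (fun z => f z / c) = fun z => f z * c⁻¹ := by funext z; rw [div_eq_mul_inv]
  rw [e, wZb_mul hf (differentiableAt_const _), wZb_const, div_eq_mul_inv]; ring
lemma wZb_neg (f : ℂ → ℂ) (w : ℂ) :
    wderivZbar (fun z => -f z) w = -wderivZbar f w := by
  unfold wderivZbar; rw [fderiv_fun_neg]; simp; ring

lemma fderiv_real_of_cdiff {f : ℂ → ℂ} {w : ℂ} (hf : DifferentiableAt ℂ f w) (v : ℂ) :
    fderiv ℝ f w v = v * deriv f w := by
  rw [hf.fderiv_restrictScalars ℝ]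
  have h1 : (fderiv ℂ f w) v = v * deriv f w := by
    conv_lhs => rw [show v = v • (1 : ℂ) by simp]
    rw [ContinuousLinearMap.map_smul]
    simp [smul_eq_mul, fderiv_apply_one_eq_deriv]
  simpa using h1

lemma wZb_of_cdiff {f : ℂ → ℂ} {w : ℂ} (hf : DifferentiableAt ℂ f w) :
    wderivZbar f w = 0 := by
  unfold wderivZbar
  rw [fderiv_real_of_cdiff hf, fderiv_real_of_cdiff hf]
  have : Complex.I * Complex.I = -1 := Complex.I_mul_I
  linear_combination (deriv f w / 2) * this

lemma wZ_cexp {h : ℂ → ℂ} {w : ℂ} (hh : DifferentiableAt ℝ h w) :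
    wderivZ (fun z => Complex.exp (h z)) w = Complex.exp (h w) * wderivZ h w := by
  have H : HasFDerivAt (fun z => Complex.exp (h z))
      ((Complex.exp (h w)) • (fderiv ℝ h w)) w := by
    have e1 : HasFDerivAt Complex.exp
        (((1 : ℂ →L[ℂ] ℂ).smulRight (Complex.exp (h w))).restrictScalars ℝ) (h w) :=
      ((Complex.hasDerivAt_exp (h w)).hasFDerivAt).restrictScalars ℝ
    have := e1.comp w hh.hasFDerivAt
    refine this.congr_fderiv ?_
    ext v
    simp [smul_eq_mul]; ring
  unfold wderivZ
  rw [H.fderiv]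
  simp [smul_eq_mul]; ring

lemma wZb_cexp {h : ℂ → ℂ} {w : ℂ} (hh : DifferentiableAt ℝ h w) :
    wderivZbar (fun z => Complex.exp (h z)) w = Complex.exp (h w) * wderivZbar h w := by
  have H : HasFDerivAt (fun z => Complex.exp (h z))
      ((Complex.exp (h w)) • (fderiv ℝ h w)) w := by
    have e1 : HasFDerivAt Complex.exp
        (((1 : ℂ →L[ℂ] ℂ).smulRight (Complex.exp (h w))).restrictScalars ℝ) (h w) :=
      ((Complex.hasDerivAt_exp (h w)).hasFDerivAt).restrictScalars ℝ
    have := e1.comp w hh.hasFDerivAt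
    refine this.congr_fderiv ?_
    ext v
    simp [smul_eq_mul]; ring
  unfold wderivZbar
  rw [H.fderiv]
  simp [smul_eq_mul]; ring

def MDiffAt (g : ℂ → Matrix (Fin 2) (Fin 2) ℂ) (w : ℂ) : Prop :=
  ∀ i j, DifferentiableAt ℝ (fun z => g z i j) w

lemma entry_mul_expand (A B : ℂ → Matrix (Fin 2) (Fin 2) ℂ) (i j : Fin 2) :
    (fun z => (A z * B z) i j) = fun z => A z i 0 * B z 0 j + A z i 1 * B z 1 j := by
  funext z; simp [Matrix.mul_apply, Fin.sum_univ_two]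

lemma MDiffAt.mul {A B : ℂ → Matrix (Fin 2) (Fin 2) ℂ} {w : ℂ}
    (hA : MDiffAt A w) (hB : MDiffAt B w) : MDiffAt (fun z => A z * B z) w := by
  intro i j
  rw [show (fun z => (A z * B z) i j) = fun z => A z i 0 * B z 0 j + A z i 1 * B z 1 j
    from entry_mul_expand A B i j]
  exact ((hA i 0).mul (hB 0 j)).add ((hA i 1).mul (hB 1 j))

lemma mZ_congr {A B : ℂ → Matrix (Fin 2) (Fin 2) ℂ} {w : ℂ} (h : A =ᶠ[nhds w] B) :
    mderivZ A w = mderivZ B w := by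
  ext i j; exact wZ_congr (h.mono fun z hz => by simp only [hz])
lemma mZb_congr {A B : ℂ → Matrix (Fin 2) (Fin 2) ℂ} {w : ℂ} (h : A =ᶠ[nhds w] B) :
    mderivZbar A w = mderivZbar B w := by
  ext i j; exact wZb_congr (h.mono fun z hz => by simp only [hz])
lemma mZ_const (B : Matrix (Fin 2) (Fin 2) ℂ) (w : ℂ) : mderivZ (fun _ => B) w = 0 := by
  ext i j; exact wZ_const _ _
lemma mZb_const (B : Matrix (Fin 2) (Fin 2) ℂ) (w : ℂ) : mderivZbar (fun _ => B) w = 0 := by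
  ext i j; exact wZb_const _ _

lemma mZ_mul {A B : ℂ → Matrix (Fin 2) (Fin 2) ℂ} {w : ℂ}
    (hA : MDiffAt A w) (hB : MDiffAt B w) :
    mderivZ (fun z => A z * B z) w = mderivZ A w * B w + A w * mderivZ B w := by
  ext i j
  simp only [mderivZ, Matrix.of_apply, Matrix.add_apply, Matrix.mul_apply, Fin.sum_univ_two]
  rw [wZ_add (f := fun z => A z i 0 * B z 0 j) (g := fun z => A z i 1 * B z 1 j)
      ((hA i 0).mul (hB 0 j)) ((hA i 1).mul (hB 1 j)),
    wZ_mul (hA i 0) (hB 0 j), wZ_mul (hA i 1) (hB 1 j)]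
  ring

lemma mZb_mul {A B : ℂ → Matrix (Fin 2) (Fin 2) ℂ} {w : ℂ}
    (hA : MDiffAt A w) (hB : MDiffAt B w) :
    mderivZbar (fun z => A z * B z) w = mderivZbar A w * B w + A w * mderivZbar B w := by
  ext i j
  simp only [mderivZbar, Matrix.of_apply, Matrix.add_apply, Matrix.mul_apply, Fin.sum_univ_two]
  rw [wZb_add (f := fun z => A z i 0 * B z 0 j) (g := fun z => A z i 1 * B z 1 j)
      ((hA i 0).mul (hB 0 j)) ((hA i 1).mul (hB 1 j)),
    wZb_mul (hA i 0) (hB 0 j), wZb_mul (hA i 1) (hB 1 j)]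
  ring

/-- The commutator `[U, σ₃]`. -/
noncomputable def CmMat (uh : ℂ → ℝ) (α : ℂ → ℂ) (lam : ℂ) (z : ℂ) :
    Matrix (Fin 2) (Fin 2) ℂ :=
  !![0, (Real.sqrt 2 : ℂ) * lam⁻¹ * (Real.exp (uh z / 2) : ℂ);
     (Real.sqrt 2 : ℂ) * lam⁻¹ * α z * (Real.exp (-(uh z) / 2) : ℂ), 0]

end API

set_option maxHeartbeats 2000000 in
theorem stmt11 (Ω : Set ℂ) (hΩ : IsOpen Ω)
    (uh : ℂ → ℝ) (α : ℂ → ℂ) (lam : ℂ)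
    (huh : ContDiffOn ℝ (⊤ : ℕ∞) uh Ω)
    (hα : DifferentiableOn ℂ α Ω)
    (hlam : ‖lam‖ = 1)
    (F : ℂ → Matrix (Fin 2) (Fin 2) ℂ)
    (hFsmooth : ∀ i j, ContDiffOn ℝ (⊤ : ℕ∞) (fun w => F w i j) Ω)
    (hFinv : ∀ w ∈ Ω, IsUnit (F w))
    (hFz : ∀ w ∈ Ω, mderivZ F w = F w * Umat uh α lam w)
    (hFzbar : ∀ w ∈ Ω, mderivZbar F w = F w * Vmat uh α lam w) :
    ∀ w ∈ Ω,
      mderivZbar (fun z => mderivZ (fun z' => F z' * sigma3 * (F z')⁻¹) z) w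
        = -(((Real.exp (uh w) + ‖α w‖ ^ 2 * Real.exp (-(uh w)) : ℝ)) : ℂ)
            • (F w * sigma3 * (F w)⁻¹) := by

  -- basic facts
  have hlam0 : lam ≠ 0 := by
    intro h; rw [h] at hlam; simp at hlam
  have huhd : ∀ z ∈ Ω, DifferentiableAt ℝ uh z := fun z hz =>
    (huh.differentiableOn (by simp)).differentiableAt (hΩ.mem_nhds hz)
  have hud : ∀ z ∈ Ω, DifferentiableAt ℝ (fun z' => ((uh z' : ℝ) : ℂ)) z := fun z hz =>
    Complex.ofRealCLM.differentiable.differentiableAt.comp z (huhd z hz)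
  have hEpfun : (fun z => ((Real.exp (uh z / 2) : ℝ) : ℂ))
      = fun z => Complex.exp (((uh z : ℝ) : ℂ) / 2) := by
    funext z; rw [Complex.ofReal_exp]; norm_cast
  have hEmfun : (fun z => ((Real.exp (-(uh z) / 2) : ℝ) : ℂ))
      = fun z => Complex.exp (-((uh z : ℝ) : ℂ) / 2) := by
    funext z; rw [Complex.ofReal_exp]; norm_cast
  have hud2 : ∀ z ∈ Ω, DifferentiableAt ℝ (fun z' => ((uh z' : ℝ) : ℂ) / 2) z := by
    intro z hz
    simp only [div_eq_mul_inv]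
    exact (hud z hz).mul_const _
  have hud2n : ∀ z ∈ Ω, DifferentiableAt ℝ (fun z' => -((uh z' : ℝ) : ℂ) / 2) z := by
    intro z hz
    simp only [div_eq_mul_inv]
    exact ((hud z hz).neg).mul_const _
  have hexpR : Differentiable ℝ Complex.exp :=
    Differentiable.restrictScalars (𝕜' := ℂ) ℝ Complex.differentiable_exp
  have hEpd : ∀ z ∈ Ω, DifferentiableAt ℝ (fun z' => ((Real.exp (uh z' / 2) : ℝ) : ℂ)) z := by
    intro z hz; rw [hEpfun]
    exact (hexpR.differentiableAt).comp z (hud2 z hz)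
  have hEmd : ∀ z ∈ Ω, DifferentiableAt ℝ (fun z' => ((Real.exp (-(uh z') / 2) : ℝ) : ℂ)) z := by
    intro z hz; rw [hEmfun]
    exact (hexpR.differentiableAt).comp z (hud2n z hz)
  have hαc : ∀ z ∈ Ω, DifferentiableAt ℂ α z := fun z hz =>
    hα.differentiableAt (hΩ.mem_nhds hz)
  have hαd : ∀ z ∈ Ω, DifferentiableAt ℝ α z := fun z hz => (hαc z hz).restrictScalars ℝ
  have hFd : ∀ z ∈ Ω, MDiffAt F z := fun z hz i j =>
    ((hFsmooth i j).differentiableOn (by simp)).differentiableAt (hΩ.mem_nhds hz)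
  have hdetU : ∀ z ∈ Ω, IsUnit (F z).det := fun z hz =>
    (Matrix.isUnit_iff_isUnit_det (F z)).mp (hFinv z hz)
  have hdet : ∀ z ∈ Ω, (F z).det ≠ 0 := fun z hz => (hdetU z hz).ne_zero
  have hdetd : ∀ z ∈ Ω, DifferentiableAt ℝ (fun z' => (F z').det) z := by
    intro z hz
    have e : (fun z' => (F z').det)
        = fun z' => F z' 0 0 * F z' 1 1 - F z' 0 1 * F z' 1 0 := by
      funext z'; rw [Matrix.det_fin_two]
    rw [e]
    exact ((hFd z hz 0 0).mul (hFd z hz 1 1)).sub ((hFd z hz 0 1).mul (hFd z hz 1 0))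
  have hGentry : ∀ (i j : Fin 2), (fun z' => (F z')⁻¹ i j)
      = fun z' => ((F z').det)⁻¹ * (!![F z' 1 1, -(F z' 0 1); -(F z' 1 0), F z' 0 0] i j) := by
    intro i j; funext z'
    rw [Matrix.inv_def, Matrix.adjugate_fin_two, Ring.inverse_eq_inv']
    simp [Matrix.smul_apply]
  have hGd : ∀ z ∈ Ω, MDiffAt (fun z' => (F z')⁻¹) z := by
    intro z hz i j
    rw [show (fun z' => (F z')⁻¹ i j) = _ from hGentry i j]
    apply DifferentiableAt.mul ((hdetd z hz).inv (hdet z hz))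
    fin_cases i <;> fin_cases j <;> simp <;>
      first
        | exact hFd z hz 1 1
        | exact (hFd z hz 0 1).neg
        | exact (hFd z hz 1 0).neg
        | exact hFd z hz 0 1
        | exact hFd z hz 1 0
        | exact hFd z hz 0 0
  have hFG : ∀ z ∈ Ω, F z * (F z)⁻¹ = 1 := fun z hz =>
    Matrix.mul_nonsing_inv (F z) (hdetU z hz)
  have hGF : ∀ z ∈ Ω, (F z)⁻¹ * F z = 1 := fun z hz =>
    Matrix.nonsing_inv_mul (F z) (hdetU z hz)
  -- derivative of the inverse
  have hGz : ∀ z ∈ Ω, mderivZ (fun z' => (F z')⁻¹) z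
      = -(Umat uh α lam z * (F z)⁻¹) := by
    intro z hz
    have h1 : mderivZ (fun z' => F z' * (F z')⁻¹) z
        = mderivZ F z * (F z)⁻¹ + F z * mderivZ (fun z' => (F z')⁻¹) z :=
      mZ_mul (hFd z hz) (hGd z hz)
    have h0 : mderivZ (fun z' => F z' * (F z')⁻¹) z = 0 := by
      rw [mZ_congr (Filter.eventuallyEq_of_mem (hΩ.mem_nhds hz) (fun y hy => hFG y hy))]
      exact mZ_const 1 z
    have hsum : mderivZ F z * (F z)⁻¹ + F z * mderivZ (fun z' => (F z')⁻¹) z = 0 := by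
      rw [← h1]; exact h0
    have h2 : F z * mderivZ (fun z' => (F z')⁻¹) z = -(mderivZ F z * (F z)⁻¹) := by
      rw [add_comm] at hsum; exact eq_neg_of_add_eq_zero_left hsum
    calc mderivZ (fun z' => (F z')⁻¹) z
        = ((F z)⁻¹ * F z) * mderivZ (fun z' => (F z')⁻¹) z := by rw [hGF z hz, one_mul]
      _ = (F z)⁻¹ * (F z * mderivZ (fun z' => (F z')⁻¹) z) := by rw [Matrix.mul_assoc]
      _ = (F z)⁻¹ * -(mderivZ F z * (F z)⁻¹) := by rw [h2]
      _ = -((F z)⁻¹ * (F z * Umat uh α lam z * (F z)⁻¹)) := by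
            rw [Matrix.mul_neg, hFz z hz]
      _ = -(Umat uh α lam z * (F z)⁻¹) := by
            rw [Matrix.mul_assoc (F z), ← Matrix.mul_assoc ((F z)⁻¹), hGF z hz, one_mul]
  have hGzb : ∀ z ∈ Ω, mderivZbar (fun z' => (F z')⁻¹) z
      = -(Vmat uh α lam z * (F z)⁻¹) := by
    intro z hz
    have h1 : mderivZbar (fun z' => F z' * (F z')⁻¹) z
        = mderivZbar F z * (F z)⁻¹ + F z * mderivZbar (fun z' => (F z')⁻¹) z :=
      mZb_mul (hFd z hz) (hGd z hz)
    have h0 : mderivZbar (fun z' => F z' * (F z')⁻¹) z = 0 := by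
      rw [mZb_congr (Filter.eventuallyEq_of_mem (hΩ.mem_nhds hz) (fun y hy => hFG y hy))]
      exact mZb_const 1 z
    have hsum : mderivZbar F z * (F z)⁻¹ + F z * mderivZbar (fun z' => (F z')⁻¹) z = 0 := by
      rw [← h1]; exact h0
    have h2 : F z * mderivZbar (fun z' => (F z')⁻¹) z = -(mderivZbar F z * (F z)⁻¹) := by
      rw [add_comm] at hsum; exact eq_neg_of_add_eq_zero_left hsum
    calc mderivZbar (fun z' => (F z')⁻¹) z
        = ((F z)⁻¹ * F z) * mderivZbar (fun z' => (F z')⁻¹) z := by rw [hGF z hz, one_mul]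
      _ = (F z)⁻¹ * (F z * mderivZbar (fun z' => (F z')⁻¹) z) := by rw [Matrix.mul_assoc]
      _ = (F z)⁻¹ * -(mderivZbar F z * (F z)⁻¹) := by rw [h2]
      _ = -((F z)⁻¹ * (F z * Vmat uh α lam z * (F z)⁻¹)) := by
            rw [Matrix.mul_neg, hFzbar z hz]
      _ = -(Vmat uh α lam z * (F z)⁻¹) := by
            rw [Matrix.mul_assoc (F z), ← Matrix.mul_assoc ((F z)⁻¹), hGF z hz, one_mul]
  -- the commutator
  have hC : ∀ z, Umat uh α lam z * sigma3 - sigma3 * Umat uh α lam z = CmMat uh α lam z := by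
    intro z
    ext i j
    fin_cases i <;> fin_cases j <;>
      simp [Umat, sigma3, CmMat, Matrix.mul_apply, Fin.sum_univ_two] <;> ring
  have hCd : ∀ z ∈ Ω, MDiffAt (CmMat uh α lam) z := by
    intro z hz i j
    fin_cases i <;> fin_cases j <;> simp only [CmMat, Matrix.cons_val', Matrix.cons_val_zero,
      Matrix.cons_val_one, Matrix.head_cons, Matrix.head_fin_const, Matrix.empty_val',
      Matrix.cons_val_fin_one]
    · exact differentiableAt_const 0
    · exact (differentiableAt_const _).mul (hEpd z hz)
    · exact ((differentiableAt_const _).mul (hαd z hz)).mul (hEmd z hz)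
    · exact differentiableAt_const 0
  -- first derivative of φ
  have hphiz : ∀ z ∈ Ω, mderivZ (fun z' => F z' * sigma3 * (F z')⁻¹) z
      = F z * CmMat uh α lam z * (F z)⁻¹ := by
    intro z hz
    have hFσ : MDiffAt (fun z' => F z' * sigma3) z :=
      MDiffAt.mul (hFd z hz) (fun i j => differentiableAt_const _)
    have e1 : mderivZ (fun z' => F z' * sigma3 * (F z')⁻¹) z
        = mderivZ (fun z' => F z' * sigma3) z * (F z)⁻¹
          + (F z * sigma3) * mderivZ (fun z' => (F z')⁻¹) z :=
      mZ_mul hFσ (hGd z hz)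
    have e2 : mderivZ (fun z' => F z' * sigma3) z = (F z * Umat uh α lam z) * sigma3 := by
      have := mZ_mul (A := F) (B := fun _ => sigma3) (hFd z hz)
        (fun i j => differentiableAt_const _)
      rw [this, mZ_const, hFz z hz]; simp
    rw [e1, e2, hGz z hz, ← hC z]
    noncomm_ring
  -- main computation at w
  intro w hw
  have hev : (fun z => mderivZ (fun z' => F z' * sigma3 * (F z')⁻¹) z)
      =ᶠ[nhds w] (fun z => F z * CmMat uh α lam z * (F z)⁻¹) :=
    Filter.eventuallyEq_of_mem (hΩ.mem_nhds hw) (fun z hz => hphiz z hz)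
  rw [mZb_congr hev]
  have hFCd : MDiffAt (fun z => F z * CmMat uh α lam z) w :=
    MDiffAt.mul (hFd w hw) (hCd w hw)
  have e1 : mderivZbar (fun z => F z * CmMat uh α lam z * (F z)⁻¹) w
      = mderivZbar (fun z => F z * CmMat uh α lam z) w * (F w)⁻¹
        + (F w * CmMat uh α lam w) * mderivZbar (fun z' => (F z')⁻¹) w :=
    mZb_mul hFCd (hGd w hw)
  have e2 : mderivZbar (fun z => F z * CmMat uh α lam z) w
      = mderivZbar F w * CmMat uh α lam w + F w * mderivZbar (CmMat uh α lam) w :=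
    mZb_mul (hFd w hw) (hCd w hw)
  -- derivative of the commutator
  set β := wderivZbar (fun z => ((uh z : ℝ) : ℂ)) w with hβ
  have hCmb : mderivZbar (CmMat uh α lam) w
      = !![0, (Real.sqrt 2 : ℂ) * lam⁻¹ * (Real.exp (uh w / 2) : ℂ) * (β / 2);
           (Real.sqrt 2 : ℂ) * lam⁻¹ * α w * (Real.exp (-(uh w) / 2) : ℂ) * (-(β / 2)), 0] := by
    have hEpz : wderivZbar (fun z => ((Real.exp (uh z / 2) : ℝ) : ℂ)) w
        = (Real.exp (uh w / 2) : ℂ) * (β / 2) := by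
      rw [hEpfun, wZb_cexp (hud2 w hw), wZb_div_const (2:ℂ) (hud w hw)]
      rw [Complex.ofReal_exp]
      norm_cast
    have hEmz : wderivZbar (fun z => ((Real.exp (-(uh z) / 2) : ℝ) : ℂ)) w
        = (Real.exp (-(uh w) / 2) : ℂ) * (-(β / 2)) := by
      rw [hEmfun, wZb_cexp (hud2n w hw)]
      have : wderivZbar (fun z => -((uh z : ℝ) : ℂ) / 2) w = -(β / 2) := by
        rw [wZb_div_const (f := fun z => -((uh z : ℝ) : ℂ)) (2:ℂ) ((hud w hw).neg), wZb_neg]; ring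
      rw [this, Complex.ofReal_exp]
      norm_cast
    ext i j
    fin_cases i <;> fin_cases j
    · simpa [mderivZbar, CmMat] using wZb_const 0 w
    · show wderivZbar (fun z => (Real.sqrt 2 : ℂ) * lam⁻¹ * ((Real.exp (uh z / 2) : ℝ) : ℂ)) w = _
      rw [wZb_mul (differentiableAt_const _) (hEpd w hw), wZb_const, hEpz]
      simp; ring
    · show wderivZbar
        (fun z => (Real.sqrt 2 : ℂ) * lam⁻¹ * α z * ((Real.exp (-(uh z) / 2) : ℝ) : ℂ)) w = _
      rw [wZb_mul (f := fun z => (Real.sqrt 2 : ℂ) * lam⁻¹ * α z) ((differentiableAt_const _).mul (hαd w hw)) (hEmd w hw),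
        wZb_mul (differentiableAt_const _) (hαd w hw), wZb_const, wZb_of_cdiff (hαc w hw), hEmz]
      simp; ring
    · simpa [mderivZbar, CmMat] using wZb_const 0 w
  -- the key algebraic identity
  have hr : (Real.sqrt 2 : ℂ) * (Real.sqrt 2 : ℂ) = 2 := by
    rw [← Complex.ofReal_mul, Real.mul_self_sqrt (by norm_num : (0:ℝ) ≤ 2)]
    norm_num
  have hl : lam * lam⁻¹ = 1 := mul_inv_cancel₀ hlam0
  have hl' : lam⁻¹ * lam = 1 := inv_mul_cancel₀ hlam0
  have hca : (conj (α w)) * α w = ((‖α w‖ : ℝ) : ℂ) ^ 2 := by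
    have := Complex.normSq_eq_conj_mul_self (z := α w)
    have h2 := Complex.sq_norm (α w)
    rw [← h2] at this
    rw [← this]
    push_cast
    ring
  have hep2 : (Real.exp (uh w / 2) : ℂ) * (Real.exp (uh w / 2) : ℂ)
      = (Real.exp (uh w) : ℂ) := by
    rw [← Complex.ofReal_mul, ← Real.exp_add]
    norm_num
  have hem2 : (Real.exp (-(uh w) / 2) : ℂ) * (Real.exp (-(uh w) / 2) : ℂ)
      = (Real.exp (-(uh w)) : ℂ) := by
    rw [← Complex.ofReal_mul, ← Real.exp_add]
    norm_num
  have key : Vmat uh α lam w * CmMat uh α lam w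
      + !![0, (Real.sqrt 2 : ℂ) * lam⁻¹ * (Real.exp (uh w / 2) : ℂ) * (β / 2);
           (Real.sqrt 2 : ℂ) * lam⁻¹ * α w * (Real.exp (-(uh w) / 2) : ℂ) * (-(β / 2)), 0]
      - CmMat uh α lam w * Vmat uh α lam w
      = (-(((Real.exp (uh w) + ‖α w‖ ^ 2 * Real.exp (-(uh w)) : ℝ)) : ℂ)) • sigma3 := by
    have h00 : (-((Real.sqrt 2 : ℂ) / 2) * lam * conj (α w) * (Real.exp (-(uh w) / 2) : ℂ))
          * ((Real.sqrt 2 : ℂ) * lam⁻¹ * α w * (Real.exp (-(uh w) / 2) : ℂ))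
        = -(((‖α w‖ : ℝ) : ℂ) ^ 2 * (Real.exp (-(uh w)) : ℂ)) := by
      calc _ = -(((Real.sqrt 2 : ℂ) * (Real.sqrt 2 : ℂ)) / 2 * (lam * lam⁻¹)
              * ((conj (α w)) * α w)
              * ((Real.exp (-(uh w) / 2) : ℂ) * (Real.exp (-(uh w) / 2) : ℂ))) := by ring
        _ = _ := by rw [hr, hl, hca, hem2]; ring
    have h00b : ((Real.sqrt 2 : ℂ) * lam⁻¹ * (Real.exp (uh w / 2) : ℂ))
          * (((Real.sqrt 2 : ℂ) / 2) * lam * (Real.exp (uh w / 2) : ℂ))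
        = (Real.exp (uh w) : ℂ) := by
      calc _ = ((Real.sqrt 2 : ℂ) * (Real.sqrt 2 : ℂ)) / 2 * (lam⁻¹ * lam)
              * ((Real.exp (uh w / 2) : ℂ) * (Real.exp (uh w / 2) : ℂ)) := by ring
        _ = _ := by rw [hr, hl', hep2]; ring
    ext i j
    fin_cases i <;> fin_cases j <;>
      simp [Vmat, CmMat, sigma3, Matrix.mul_apply, Fin.sum_univ_two, -Complex.ofReal_exp] <;>
      first
        | ring1
        | linear_combination h00 - h00b
        | linear_combination h00b - h00
  rw [e1, e2, hFzbar w hw, hGzb w hw, hCmb]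
  calc (F w * Vmat uh α lam w * CmMat uh α lam w
          + F w * !![0, (Real.sqrt 2 : ℂ) * lam⁻¹ * (Real.exp (uh w / 2) : ℂ) * (β / 2);
              (Real.sqrt 2 : ℂ) * lam⁻¹ * α w * (Real.exp (-(uh w) / 2) : ℂ) * (-(β / 2)), 0])
          * (F w)⁻¹
        + F w * CmMat uh α lam w * -(Vmat uh α lam w * (F w)⁻¹)
      = F w * (Vmat uh α lam w * CmMat uh α lam w
          + !![0, (Real.sqrt 2 : ℂ) * lam⁻¹ * (Real.exp (uh w / 2) : ℂ) * (β / 2);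
              (Real.sqrt 2 : ℂ) * lam⁻¹ * α w * (Real.exp (-(uh w) / 2) : ℂ) * (-(β / 2)), 0]
          - CmMat uh α lam w * Vmat uh α lam w) * (F w)⁻¹ := by noncomm_ring
    _ = F w * ((-(((Real.exp (uh w) + ‖α w‖ ^ 2 * Real.exp (-(uh w)) : ℝ)) : ℂ))
          • sigma3) * (F w)⁻¹ := by rw [key]
    _ = -(((Real.exp (uh w) + ‖α w‖ ^ 2 * Real.exp (-(uh w)) : ℝ)) : ℂ)
          • (F w * sigma3 * (F w)⁻¹) := by
        rw [Matrix.mul_smul, Matrix.smul_mul]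
end

section
/- For all z, λ ∈ ℂ with |λ| = 1, define the 2×2 complex matrices F := (1 + |z|²)^{−1/2}·[[1, zλ⁻¹], [−z̄λ, 1]] and B := (1 + |z|²)^{−1/2}·[[1, 0], [z̄λ, 1 + |z|²]]. Then F is special unitary (F*F = I and det F = 1), det B = 1, and [[1, zλ⁻¹], [0, 1]] = F·B. Moreover, for fixed z the entries of B are polynomials in λ, and at λ = 0 the matrix B equals the diagonal matrix (1 + |z|²)^{−1/2}·diag(1, 1 + |z|²), which has positive real diagonal entries. -/
open Complex ComplexConjugate Matrix

private lemma stmt13_aux1 (z lam : ℂ) (hlam0 : lam ≠ 0) (hclam0 : conj lam ≠ 0)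
    (hll : conj lam * lam = 1)
    (hzz : conj z * z = (‖z‖ : ℂ)^2)
    (sr : ℝ) (s : ℂ) (hsne : s ≠ 0) (hs2 : s * s = 1 + (‖z‖ : ℂ)^2)
    (hscs : conj s = s) (hsr : ((sr : ℝ):ℂ) = s) :
    (((sr:ℂ))⁻¹ • !![1, z * lam⁻¹; -(conj z) * lam, 1] : Matrix (Fin 2) (Fin 2) ℂ)ᴴ *
    (((sr:ℂ))⁻¹ • !![1, z * lam⁻¹; -(conj z) * lam, 1]) = 1 := by
  ext i j
  fin_cases i <;> fin_cases j <;>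
    simp [Matrix.mul_apply, Fin.sum_univ_two, Matrix.conjTranspose_apply, hsr, hscs,
      _root_.map_mul] <;>
    field_simp
  · linear_combination z * conj z * hll + hzz - hs2
  · linear_combination -z * hll
  · linear_combination -(conj z) * hll
  · linear_combination (1 - s^2) * hll + hzz - hs2

private lemma stmt13_aux2 (z lam : ℂ) (hlam0 : lam ≠ 0) (hll : conj lam * lam = 1)
    (hzz : conj z * z = (‖z‖ : ℂ)^2)
    (sr : ℝ) (s : ℂ) (hsne : s ≠ 0) (hs2 : s * s = 1 + (‖z‖ : ℂ)^2)
    (hsr : ((sr : ℝ):ℂ) = s) :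
    (((sr:ℂ))⁻¹ • !![1, z * lam⁻¹; -(conj z) * lam, 1] : Matrix (Fin 2) (Fin 2) ℂ).det = 1 ∧
    (((sr:ℂ))⁻¹ • !![1, 0; conj z * lam, 1 + (‖z‖ : ℂ)^2]
      : Matrix (Fin 2) (Fin 2) ℂ).det = 1 ∧
    !![1, z * lam⁻¹; 0, 1] = (((sr:ℂ))⁻¹ • !![1, z * lam⁻¹; -(conj z) * lam, 1]) *
      (((sr:ℂ))⁻¹ • !![1, 0; conj z * lam, 1 + (‖z‖ : ℂ)^2]) := by
  refine ⟨?_, ?_, ?_⟩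
  · simp [Matrix.det_fin_two, hsr]
    field_simp
    linear_combination hzz - hs2
  · simp [Matrix.det_fin_two, hsr]
    field_simp
    linear_combination -hs2
  · ext i j
    fin_cases i <;> fin_cases j <;>
      simp [Matrix.mul_apply, Fin.sum_univ_two, hsr] <;> field_simp
    · linear_combination hs2 - hzz
    · linear_combination z * hs2
    · linear_combination
    · linear_combination hs2

private lemma stmt13_aux3 (z : ℂ) (sr : ℝ) (hs : 0 < sr)
    (hpos : (0:ℝ) < 1 + ‖z‖ ^ 2)
    (B : ℂ → Matrix (Fin 2) (Fin 2) ℂ)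
    (hB : B = fun μ => ((sr:ℂ))⁻¹ • !![1, 0; conj z * μ, 1 + (‖z‖ : ℂ) ^ 2]) :
    (∀ i j : Fin 2, ∃ P : Polynomial ℂ, ∀ μ : ℂ, B μ i j = P.eval μ) ∧
    B 0 = ((sr:ℂ))⁻¹ • Matrix.diagonal ![1, 1 + (‖z‖ : ℂ) ^ 2] ∧
    (∀ i : Fin 2, ((B 0) i i).im = 0 ∧ 0 < ((B 0) i i).re) := by
  have hB0 : B 0 = ((sr:ℂ))⁻¹ • !![1, 0; conj z * (0:ℂ), 1 + (‖z‖ : ℂ) ^ 2] := by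
    rw [hB]
  have hBmu : ∀ μ : ℂ, B μ = ((sr:ℂ))⁻¹ • !![1, 0; conj z * μ, 1 + (‖z‖ : ℂ) ^ 2] :=
    fun μ => by rw [hB]
  refine ⟨?_, ?_, ?_⟩
  · intro i j
    fin_cases i <;> fin_cases j
    · exact ⟨Polynomial.C ((sr:ℂ))⁻¹, fun μ => by rw [hBmu]; simp⟩
    · exact ⟨0, fun μ => by rw [hBmu]; simp⟩
    · refine ⟨Polynomial.C ((sr:ℂ))⁻¹ * (Polynomial.C (conj z) * Polynomial.X), fun μ => ?_⟩
      rw [hBmu]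
      simp
    · exact ⟨Polynomial.C (((sr:ℂ))⁻¹ * (1 + (‖z‖ : ℂ) ^ 2)), fun μ => by
        rw [hBmu]; simp⟩
  · rw [hB0]
    congr 1
    ext i j
    fin_cases i <;> fin_cases j <;> simp
  · have h0 : (((sr:ℂ))⁻¹ • !![1, 0; conj z * (0:ℂ), 1 + (‖z‖ : ℂ) ^ 2]
        : Matrix (Fin 2) (Fin 2) ℂ) 0 0 = ((sr⁻¹ : ℝ) : ℂ) := by push_cast; simp
    have h1 : (((sr:ℂ))⁻¹ • !![1, 0; conj z * (0:ℂ), 1 + (‖z‖ : ℂ) ^ 2]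
        : Matrix (Fin 2) (Fin 2) ℂ) 1 1 = ((sr⁻¹ * (1 + ‖z‖ ^ 2) : ℝ) : ℂ) := by
      push_cast; simp
    rw [Fin.forall_fin_two, hB0]
    constructor
    · rw [h0]
      refine ⟨Complex.ofReal_im _, ?_⟩
      rw [Complex.ofReal_re]
      positivity
    · rw [h1]
      refine ⟨Complex.ofReal_im _, ?_⟩
      rw [Complex.ofReal_re]
      exact mul_pos (inv_pos.mpr hs) hpos

theorem stmt13 (z lam : ℂ) (hlam : ‖lam‖ = 1) :
    let F : Matrix (Fin 2) (Fin 2) ℂ :=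
      ((Real.sqrt (1 + ‖z‖ ^ 2))⁻¹ : ℂ) • !![1, z * lam⁻¹; -(conj z) * lam, 1]
    let B : ℂ → Matrix (Fin 2) (Fin 2) ℂ := fun μ =>
      ((Real.sqrt (1 + ‖z‖ ^ 2))⁻¹ : ℂ) •
        !![1, 0; conj z * μ, 1 + (‖z‖ : ℂ) ^ 2]
    -- `F` is special unitary
    Fᴴ * F = 1 ∧ F.det = 1 ∧
    -- `det B = 1` and the Iwasawa factorization `Φ = F·B`
    (B lam).det = 1 ∧
    !![1, z * lam⁻¹; 0, 1] = F * B lam ∧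
    -- for fixed `z` the entries of `B` are polynomials in `λ`
    (∀ i j : Fin 2, ∃ P : Polynomial ℂ, ∀ μ : ℂ, B μ i j = P.eval μ) ∧
    -- at `λ = 0`, `B` is the diagonal matrix `(1+|z|²)^{-1/2}·diag(1, 1+|z|²)`
    B 0 = ((Real.sqrt (1 + ‖z‖ ^ 2))⁻¹ : ℂ) •
      Matrix.diagonal ![1, 1 + (‖z‖ : ℂ) ^ 2] ∧
    -- whose diagonal entries are positive reals
    (∀ i : Fin 2, ((B 0) i i).im = 0 ∧ 0 < ((B 0) i i).re) := by
  intro F B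
  have hlam0 : lam ≠ 0 := by
    intro h; rw [h] at hlam; simp at hlam
  have hll : conj lam * lam = 1 := by
    rw [mul_comm, Complex.mul_conj]
    norm_cast
    rw [Complex.normSq_eq_norm_sq, hlam]; norm_num
  have hzz : conj z * z = (‖z‖ : ℂ) ^ 2 := by
    rw [mul_comm, Complex.mul_conj]
    norm_cast
    exact Complex.normSq_eq_norm_sq z
  have hpos : (0:ℝ) < 1 + ‖z‖ ^ 2 := by positivity
  have hs : (0:ℝ) < Real.sqrt (1 + ‖z‖ ^ 2) := Real.sqrt_pos.mpr hpos
  have hsne : ((Real.sqrt (1 + ‖z‖ ^ 2) : ℝ) : ℂ) ≠ 0 := by exact_mod_cast hs.ne'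
  have hs2 : ((Real.sqrt (1 + ‖z‖ ^ 2) : ℝ) : ℂ) *
      ((Real.sqrt (1 + ‖z‖ ^ 2) : ℝ) : ℂ) = 1 + (‖z‖ : ℂ) ^ 2 := by
    rw [← Complex.ofReal_mul, Real.mul_self_sqrt (le_of_lt hpos)]
    push_cast; ring
  have hscs : conj ((Real.sqrt (1 + ‖z‖ ^ 2) : ℝ) : ℂ) =
      ((Real.sqrt (1 + ‖z‖ ^ 2) : ℝ) : ℂ) := Complex.conj_ofReal _
  obtain ⟨hdF, hdB, hFB⟩ := stmt13_aux2 z lam hlam0 hll hzz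
    (Real.sqrt (1 + ‖z‖ ^ 2)) _ hsne hs2 rfl
  obtain ⟨hpoly, hdiag, hposd⟩ := stmt13_aux3 z (Real.sqrt (1 + ‖z‖ ^ 2)) hs hpos B rfl
  exact ⟨stmt13_aux1 z lam hlam0 (by simpa using hlam0) hll hzz (Real.sqrt (1 + ‖z‖ ^ 2)) _ hsne hs2 hscs rfl,
    hdF, hdB, hFB, hpoly, hdiag, hposd⟩
end

section
/- For all z, λ ∈ ℂ with |λ| = 1, set a := λ⁻¹z − z̄λ. Then ā = −a; the matrix F := [[cosh a, sinh a], [sinh a, cosh a]] is special unitary (F*F = I and det F = 1); and with b := z̄λ one has the factorization exp(λ⁻¹z·[[0,1],[1,0]]) = [[cosh(λ⁻¹z), sinh(λ⁻¹z)], [sinh(λ⁻¹z), cosh(λ⁻¹z)]] = F·B, where B := [[cosh b, sinh b], [sinh b, cosh b]]. For fixed z the entries of B are entire functions of λ, and B equals the identity matrix at λ = 0. -/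
open Complex ComplexConjugate Matrix

lemma exp_sym (w : ℂ) :
    NormedSpace.exp (w • (!![0, 1; 1, 0] : Matrix (Fin 2) (Fin 2) ℂ))
      = !![Complex.cosh w, Complex.sinh w; Complex.sinh w, Complex.cosh w] := by
  set P : Matrix (Fin 2) (Fin 2) ℂ := !![1, 1; 1, -1] with hP
  have hPinv : P⁻¹ = (2⁻¹ : ℂ) • P := by
    apply inv_eq_right_inv
    ext i j
    fin_cases i <;> fin_cases j <;>
      simp [hP, Matrix.mul_apply, Fin.sum_univ_two, Matrix.one_apply] <;> ring
  have hconj : w • (!![0, 1; 1, 0] : Matrix (Fin 2) (Fin 2) ℂ)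
      = P * Matrix.diagonal ![w, -w] * P⁻¹ := by
    rw [hPinv]
    ext i j
    fin_cases i <;> fin_cases j <;>
      simp [hP, Matrix.mul_apply, Fin.sum_univ_two, Matrix.diagonal_apply,
        Matrix.vecHead, Matrix.vecTail, Matrix.vecMul_diagonal] <;> ring
  have hU : IsUnit P := by
    apply (Matrix.isUnit_iff_isUnit_det P).mpr
    simp [hP, Matrix.det_fin_two_of]
    norm_num
  rw [hconj, Matrix.exp_conj P (Matrix.diagonal ![w, -w]) hU, Matrix.exp_diagonal, hPinv]
  ext i j
  fin_cases i <;> fin_cases j <;>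
    simp [hP, Matrix.mul_apply, Fin.sum_univ_two, Matrix.diagonal_apply,
      Matrix.vecHead, Matrix.vecTail, Matrix.vecMul_diagonal, Pi.exp_def,
      ← Complex.exp_eq_exp_ℂ, Complex.cosh, Complex.sinh] <;> ring

theorem stmt14 (z lam : ℂ) (hlam : ‖lam‖ = 1) :
    let a : ℂ := lam⁻¹ * z - conj z * lam
    let F : Matrix (Fin 2) (Fin 2) ℂ :=
      !![Complex.cosh a, Complex.sinh a; Complex.sinh a, Complex.cosh a]
    let B : ℂ → Matrix (Fin 2) (Fin 2) ℂ := fun μ =>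
      !![Complex.cosh (conj z * μ), Complex.sinh (conj z * μ);
         Complex.sinh (conj z * μ), Complex.cosh (conj z * μ)]
    -- `ā = −a`
    conj a = -a ∧
    -- `F` is special unitary
    Fᴴ * F = 1 ∧ F.det = 1 ∧
    -- `Φ = exp(λ⁻¹z·[[0,1],[1,0]])` and the factorization `Φ = F·B`
    NormedSpace.exp ((lam⁻¹ * z) • (!![0, 1; 1, 0] : Matrix (Fin 2) (Fin 2) ℂ))
      = !![Complex.cosh (lam⁻¹ * z), Complex.sinh (lam⁻¹ * z);
           Complex.sinh (lam⁻¹ * z), Complex.cosh (lam⁻¹ * z)] ∧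
    !![Complex.cosh (lam⁻¹ * z), Complex.sinh (lam⁻¹ * z);
       Complex.sinh (lam⁻¹ * z), Complex.cosh (lam⁻¹ * z)] = F * B lam ∧
    -- for fixed `z`, the entries of `B` are entire functions of `λ`
    (∀ i j : Fin 2, Differentiable ℂ (fun μ => B μ i j)) ∧
    -- `B` equals the identity matrix at `λ = 0`
    B 0 = 1 := by
  intro a F B
  have hl0 : lam ≠ 0 := by
    intro h; rw [h] at hlam; simp at hlam
  have hc : conj lam = lam⁻¹ := by
    apply eq_inv_of_mul_eq_one_left
    rw [mul_comm, Complex.mul_conj, Complex.normSq_eq_norm_sq, hlam]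
    norm_num
  have hca : conj a = -a := by
    show conj (lam⁻¹ * z - conj z * lam) = -(lam⁻¹ * z - conj z * lam)
    rw [map_sub, _root_.map_mul, _root_.map_mul, map_inv₀, hc, inv_inv, Complex.conj_conj]
    ring
  refine ⟨hca, ?_, ?_, exp_sym _, ?_, ?_, ?_⟩
  · ext i j
    fin_cases i <;> fin_cases j <;>
      simp [F, Matrix.mul_apply, Fin.sum_univ_two, Matrix.conjTranspose_apply,
        Matrix.one_apply, ← Complex.cosh_conj, ← Complex.sinh_conj, hca,
        Complex.cosh_neg, Complex.sinh_neg] <;>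
      first
        | linear_combination Complex.cosh_sq_sub_sinh_sq a
        | ring
  · show Matrix.det !![Complex.cosh a, Complex.sinh a; Complex.sinh a, Complex.cosh a] = 1
    rw [Matrix.det_fin_two_of]
    have := Complex.cosh_sq_sub_sinh_sq a
    ring_nf
    ring_nf at this
    linear_combination this
  · have hsum : lam⁻¹ * z = a + conj z * lam := by show _ = lam⁻¹ * z - conj z * lam + _; ring
    ext i j
    fin_cases i <;> fin_cases j <;>
      simp [F, B, Matrix.mul_apply, Fin.sum_univ_two, hsum,
        Complex.cosh_add, Complex.sinh_add] <;> ring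
  · intro i j
    fin_cases i <;> fin_cases j <;> simp [B] <;> fun_prop
  · show !![Complex.cosh (conj z * 0), _; _, _] = 1
    simp [Matrix.one_fin_two]
end
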